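/- Assume |d| > 2. For every n ≥ 1, the sum ∑_{j=1}^{n−1} 1/(f_j(d)·f_{j+1}(d)) equals f_{n−1}(d)/f_n(d). -/

import Mathlib

noncomputable def f (d : ℝ) : ℕ → ℝ
  | 0 => 0
  | 1 => 1
  | (i + 2) => -d * f d (i + 1) - f d i

lemma f_rec (d : ℝ) (i : ℕ) : f d (i + 2) = -d * f d (i + 1) - f d i := rfl

lemma f_grow (d : ℝ) (hd : |d| > 2) : ∀ i : ℕ, 1 ≤ i →
    1 ≤ |f d i| ∧ |f d i| < |f d (i + 1)| := by
  intro i hi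
  induction i with
  | zero => omega
  | succ k ih =>
    rcases Nat.eq_or_lt_of_le hi with h | h
    · simp only [← h]
      constructor
      · simp [f]
      · simp only [f]
        have : |-d * 1 - 0| = |d| := by rw [abs_sub_comm]; simp
        simp [this]; linarith
    · have hk : 1 ≤ k := by omega
      obtain ⟨h1, h2⟩ := ih hk
      constructor
      · linarith
      · show |f d (k + 1)| < |f d (k + 2)|
        rw [f_rec]
        have hb : |(-d) * f d (k + 1)| - |f d k| ≤ |-d * f d (k + 1) - f d k| := by
          calc |(-d) * f d (k + 1)| - |f d k| ≤ |(-d) * f d (k + 1) - f d k| :=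
            abs_sub_abs_le_abs_sub _ _
          _ = _ := by ring_nf
        rw [abs_mul, abs_neg] at hb
        nlinarith [abs_nonneg (f d (k+1))]

lemma f_ne (d : ℝ) (hd : |d| > 2) (i : ℕ) (hi : 1 ≤ i) : f d i ≠ 0 := by
  have := (f_grow d hd i hi).1
  intro h; rw [h] at this; simp at this; linarith

lemma cassini (d : ℝ) : ∀ n : ℕ, 1 ≤ n →
    f d n * f d n - f d (n - 1) * f d (n + 1) = 1 := by
  intro n hn
  induction n with
  | zero => omega
  | succ k ih =>
    rcases Nat.eq_or_lt_of_le hn with h | h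
    · simp only [← h]; simp [f]
    · obtain ⟨m, rfl⟩ : ∃ m, k = m + 1 := ⟨k - 1, by omega⟩
      have := ih (by omega)
      simp only [Nat.add_sub_cancel] at this ⊢
      simp only [show m + 1 + 1 = m + 2 from rfl] at this
      rw [f_rec d (m + 1), f_rec d m]
      linear_combination this + f d m * f_rec d m

theorem stmt_5 (d : ℝ) (hd : |d| > 2) : ∀ n : ℕ, 1 ≤ n →
    ∑ j ∈ Finset.Icc 1 (n - 1), 1 / (f d j * f d (j + 1)) =
      f d (n - 1) / f d n := by
  intro n hn
  induction n with
  | zero => omega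
  | succ k ih =>
    rcases Nat.eq_or_lt_of_le hn with h | h
    · simp only [← h]; simp [f]
    · obtain ⟨m, rfl⟩ : ∃ m, k = m + 1 := ⟨k - 1, by omega⟩
      have ihh := ih (by omega)
      simp only [Nat.add_sub_cancel] at ihh ⊢
      rw [Finset.sum_Icc_succ_top (by omega), ihh]
      have h1 := f_ne d hd (m + 1) (by omega)
      have h2 := f_ne d hd (m + 2) (by omega)
      have hc := cassini d (m + 1) (by omega)
      simp only [Nat.add_sub_cancel, show m + 1 + 1 = m + 2 from rfl] at hc ⊢
      field_simp
      linear_combination -hc
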